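/- Let p and a be elements of an associative unital ℂ-algebra R with a invertible, and let i denote the imaginary unit. For u ∈ ℂ let L(u) be the 2×2 matrix over R with rows (u·1 − p, −a) and (a^{-1}, 0). Set L¹(u) = L(u) ⊗ I and L²(v) = I ⊗ L(v) (4×4 Kronecker products over R), and R(u) = u·Id_4 − i·P where P is the permutation (flip) matrix on ℂ²⊗ℂ², regarded as a matrix with central scalar entries. Then the relation L²(v)·L¹(u)·R(u−v) = R(u−v)·L¹(u)·L²(v) holds for all u, v ∈ ℂ if and only if p·a − a·p = −i·a. -/
import Mathlib
set_option maxHeartbeats 1000000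


noncomputable section

open Matrix Kronecker

/-- The permutation (flip) matrix `P` on `ℂ² ⊗ ℂ²`. -/
def Pflip : Matrix (Fin 2 × Fin 2) (Fin 2 × Fin 2) ℂ :=
  Matrix.of fun p q => if p.1 = q.2 ∧ p.2 = q.1 then 1 else 0

/-- The rational R-matrix `R(u) = u·Id₄ − i·P`. -/
def Rmat (u : ℂ) : Matrix (Fin 2 × Fin 2) (Fin 2 × Fin 2) ℂ :=
  u • (1 : Matrix (Fin 2 × Fin 2) (Fin 2 × Fin 2) ℂ) - Complex.I • Pflip

/-- The RLL relation `L²(v)·L¹(u)·R(u−v) = R(u−v)·L¹(u)·L²(v)` with the rational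
R-matrix holds for all `u, v ∈ ℂ` if and only if `p·a − a·p = −i·a`. -/
theorem rll_iff_weyl_commutation
    (R : Type*) [Ring R] [Algebra ℂ R] (p : R) (a : Rˣ)
    (L : ℂ → Matrix (Fin 2) (Fin 2) R)
    (hL : ∀ u : ℂ, L u = !![algebraMap ℂ R u - p, -(a : R); ((a⁻¹ : Rˣ) : R), 0]) :
    (∀ u v : ℂ,
        ((1 : Matrix (Fin 2) (Fin 2) R) ⊗ₖ L v) * (L u ⊗ₖ (1 : Matrix (Fin 2) (Fin 2) R)) *
            (Rmat (u - v)).map (algebraMap ℂ R) =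
          (Rmat (u - v)).map (algebraMap ℂ R) * (L u ⊗ₖ (1 : Matrix (Fin 2) (Fin 2) R)) *
            ((1 : Matrix (Fin 2) (Fin 2) R) ⊗ₖ L v)) ↔
      p * (a : R) - (a : R) * p = -(algebraMap ℂ R Complex.I) * (a : R) := by
  constructor
  · intro hRLL
    have E := congrFun (congrFun (hRLL 1 0) ((0 : Fin 2), (0 : Fin 2))) ((0 : Fin 2), (1 : Fin 2))
    simp only [hL] at E
    simp [Rmat, Pflip, Matrix.mul_apply, Fintype.sum_prod_type, Fin.sum_univ_succ,
      Matrix.one_apply, kroneckerMap_apply, Prod.ext_iff] at E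
    linear_combination (norm := noncomm_ring) Algebra.commutes Complex.I (p * (↑a : R)) - E
  · intro h u v
    have swap_a : (↑a : R) * p = p * ↑a + algebraMap ℂ R Complex.I * ↑a := by
      linear_combination (norm := noncomm_ring) -h
    have swap_a' : ∀ y : R, (↑a : R) * (p * y) = p * (↑a * y) + algebraMap ℂ R Complex.I * (↑a * y) := by
      intro y; rw [← mul_assoc, swap_a, add_mul, mul_assoc, mul_assoc]
    have swap_b : (↑a⁻¹ : R) * p = p * ↑a⁻¹ - algebraMap ℂ R Complex.I * ↑a⁻¹ := by
      have e1 : (↑a⁻¹ : R) * p = ↑a⁻¹ * (p * ↑a * ↑a⁻¹) := by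
        rw [Units.mul_inv_cancel_right]
      rw [show p * (↑a : R) = ↑a * p - algebraMap ℂ R Complex.I * ↑a from by
        linear_combination (norm := noncomm_ring) h] at e1
      calc (↑a⁻¹ : R) * p = ↑a⁻¹ * ((↑a * p - algebraMap ℂ R Complex.I * ↑a) * ↑a⁻¹) := e1
        _ = ↑a⁻¹ * (↑a * (p * ↑a⁻¹)) - ↑a⁻¹ * (algebraMap ℂ R Complex.I * (↑a * ↑a⁻¹)) := by
            noncomm_ring
        _ = p * ↑a⁻¹ - algebraMap ℂ R Complex.I * ↑a⁻¹ := by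
            rw [Units.inv_mul_cancel_left, Units.mul_inv, mul_one,
              ← Algebra.commutes Complex.I ((↑a⁻¹ : R))]
    have swap_b' : ∀ y : R, (↑a⁻¹ : R) * (p * y) = p * (↑a⁻¹ * y) - algebraMap ℂ R Complex.I * (↑a⁻¹ * y) := by
      intro y; rw [← mul_assoc, swap_b, sub_mul, mul_assoc, mul_assoc]
    have cp : ∀ c : ℂ, p * algebraMap ℂ R c = algebraMap ℂ R c * p :=
      fun c => (Algebra.commutes c p).symm
    have cp' : ∀ (c : ℂ) (y : R), p * (algebraMap ℂ R c * y) = algebraMap ℂ R c * (p * y) := by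
      intro c y; rw [← mul_assoc, cp, mul_assoc]
    have ca : ∀ c : ℂ, (↑a : R) * algebraMap ℂ R c = algebraMap ℂ R c * ↑a :=
      fun c => (Algebra.commutes c (↑a : R)).symm
    have ca' : ∀ (c : ℂ) (y : R), (↑a : R) * (algebraMap ℂ R c * y) = algebraMap ℂ R c * (↑a * y) := by
      intro c y; rw [← mul_assoc, ca, mul_assoc]
    have cb : ∀ c : ℂ, (↑a⁻¹ : R) * algebraMap ℂ R c = algebraMap ℂ R c * ↑a⁻¹ :=
      fun c => (Algebra.commutes c (↑a⁻¹ : R)).symm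
    have cb' : ∀ (c : ℂ) (y : R), (↑a⁻¹ : R) * (algebraMap ℂ R c * y) = algebraMap ℂ R c * (↑a⁻¹ * y) := by
      intro c y; rw [← mul_assoc, cb, mul_assoc]
    have sJU : algebraMap ℂ R u * algebraMap ℂ R Complex.I = algebraMap ℂ R Complex.I * algebraMap ℂ R u := (Algebra.commutes _ _).symm
    have sJU' : ∀ y : R, algebraMap ℂ R u * (algebraMap ℂ R Complex.I * y) = algebraMap ℂ R Complex.I * (algebraMap ℂ R u * y) := by
      intro y; rw [← mul_assoc, sJU, mul_assoc]
    have sJV : algebraMap ℂ R v * algebraMap ℂ R Complex.I = algebraMap ℂ R Complex.I * algebraMap ℂ R v := (Algebra.commutes _ _).symm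
    have sJV' : ∀ y : R, algebraMap ℂ R v * (algebraMap ℂ R Complex.I * y) = algebraMap ℂ R Complex.I * (algebraMap ℂ R v * y) := by
      intro y; rw [← mul_assoc, sJV, mul_assoc]
    have sUV : algebraMap ℂ R v * algebraMap ℂ R u = algebraMap ℂ R u * algebraMap ℂ R v :=
      (Algebra.commutes _ _).symm
    have sUV' : ∀ y : R,
        algebraMap ℂ R v * (algebraMap ℂ R u * y) = algebraMap ℂ R u * (algebraMap ℂ R v * y) := by
      intro y; rw [← mul_assoc, sUV, mul_assoc]
    ext ⟨i, j⟩ ⟨k, l⟩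
    fin_cases i <;> fin_cases j <;> fin_cases k <;> fin_cases l <;>
      simp only [hL] <;>
      simp [Rmat, Pflip, Matrix.mul_apply, Fintype.sum_prod_type, Fin.sum_univ_succ,
        Matrix.one_apply, kroneckerMap_apply, Prod.ext_iff] <;>
      simp [mul_sub, sub_mul, mul_add, add_mul, neg_mul, mul_neg, mul_assoc,
        swap_a, swap_a', swap_b, swap_b', cp, cp', ca, ca', cb, cb',
        sJU, sJU', sJV, sJV', sUV, sUV', sub_eq_add_neg] <;>
      abel
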